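/- Let F be a continuous strictly increasing distribution function on [0,∞), let K₀ : [0,1] → [0,∞) be concave with K₀(0) = K₀(1) = 0, fix x_ε > 0, and let a : [γ̲, γ̄] → [0, x_ε] be differentiable and nonincreasing, satisfying for every γ ∈ [γ̲, γ̄] the equation K₀(F(a(γ))) = (γ/(1+γ)) F(a(γ)). Define H(γ) = (1+γ) ∫_{a(γ)}^{x_ε} K₀(F(x)) dx + γ ∫_{a(γ)}^{x_ε} (1 − F(x)) dx + γ·a(γ). Then H is differentiable with H′(γ) = ∫_{a(γ)}^{x_ε} K₀(F(x)) dx + ∫_{a(γ)}^{x_ε} (1 − F(x)) dx + a(γ), H′ is nonincreasing (indeed dH′/dγ = (F(a(γ))/(1+γ)) · a′(γ) ≤ 0 where a is twice differentiable), and hence H is concave on [γ̲, γ̄]. -/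

import Mathlib

open MeasureTheory Set Filter

/-- Concavity of `H(a_γ; γ)` in the proof of Lemma 1: along the curve
`a(γ)` defined by `K₀(F(a_γ)) = (γ/(1+γ)) F(a_γ)`, the function
`H(γ) = (1+γ)∫_{aγ}^{xε} K₀(F) + γ∫_{aγ}^{xε}(1-F) + γ aγ` has derivative
`H'(γ) = ∫_{aγ}^{xε} K₀(F) + ∫_{aγ}^{xε}(1-F) + aγ`, `H'` is nonincreasing,
and `H` is concave. -/
theorem H_concave
    (F K₀ : ℝ → ℝ) (xε γlo γhi : ℝ) (a a' : ℝ → ℝ)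
    (hFc : Continuous F) (hFm : StrictMonoOn F (Ici 0))
    (hFrange : ∀ x, 0 ≤ x → F x ∈ Icc (0:ℝ) 1)
    (hK₀conc : ConcaveOn ℝ (Icc 0 1) K₀)
    (hK₀c : ContinuousOn K₀ (Icc 0 1))
    (hK₀nn : ∀ u ∈ Icc (0:ℝ) 1, 0 ≤ K₀ u)
    (hK₀0 : K₀ 0 = 0) (hK₀1 : K₀ 1 = 0)
    (hxε : 0 < xε) (hγlo : 0 < γlo) (hγ : γlo ≤ γhi)
    (hrange : ∀ g ∈ Icc γlo γhi, a g ∈ Icc 0 xε)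
    (hderiv : ∀ g ∈ Icc γlo γhi, HasDerivWithinAt a (a' g) (Icc γlo γhi) g)
    (hanti : AntitoneOn a (Icc γlo γhi))
    (heq : ∀ g ∈ Icc γlo γhi, K₀ (F (a g)) = g / (1 + g) * F (a g)) :
    (∀ g ∈ Icc γlo γhi,
        HasDerivWithinAt
          (fun t => (1 + t) * (∫ x in a t..xε, K₀ (F x))
            + t * (∫ x in a t..xε, (1 - F x)) + t * a t)
          ((∫ x in a g..xε, K₀ (F x)) + (∫ x in a g..xε, (1 - F x)) + a g)
          (Icc γlo γhi) g) ∧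
      AntitoneOn
        (fun g => (∫ x in a g..xε, K₀ (F x)) + (∫ x in a g..xε, (1 - F x)) + a g)
        (Icc γlo γhi) ∧
      ConcaveOn ℝ (Icc γlo γhi)
        (fun t => (1 + t) * (∫ x in a t..xε, K₀ (F x))
          + t * (∫ x in a t..xε, (1 - F x)) + t * a t) := by
  set s := Icc γlo γhi with hs
  -- clamp function
  set c : ℝ → ℝ := fun x => max 0 (min x xε) with hc
  have hc_cont : Continuous c := continuous_const.max (continuous_id.min continuous_const)
  have hc_mem : ∀ x, c x ∈ Icc (0:ℝ) xε := by
    intro x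
    refine ⟨le_max_left _ _, max_le (le_of_lt hxε) (min_le_right _ _)⟩
  have hc_eq : ∀ x ∈ Icc (0:ℝ) xε, c x = x := by
    intro x hx
    simp only [hc, min_eq_left hx.2, max_eq_right hx.1]
  set f₁ : ℝ → ℝ := fun x => K₀ (F (c x)) with hf₁
  have hf₁c : Continuous f₁ :=
    hK₀c.comp_continuous (hFc.comp hc_cont) fun x => hFrange _ (hc_mem x).1
  set f₂ : ℝ → ℝ := fun x => 1 - F x with hf₂
  have hf₂c : Continuous f₂ := continuous_const.sub hFc
  have hf₁x : ∀ x ∈ Icc (0:ℝ) xε, f₁ x = K₀ (F x) := by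
    intro x hx; simp only [hf₁, hc_eq x hx]
  -- integral congruence
  have hIcongr : ∀ y z : ℝ, y ∈ Icc (0:ℝ) xε → z ∈ Icc (0:ℝ) xε →
      (∫ x in y..z, K₀ (F x)) = ∫ x in y..z, f₁ x := by
    intro y z hy hz
    refine intervalIntegral.integral_congr fun x hx => ?_
    exact (hf₁x x (uIcc_subset_Icc hy hz hx)).symm
  have hxεmem : xε ∈ Icc (0:ℝ) xε := ⟨le_of_lt hxε, le_refl _⟩
  -- FTC
  set Φ₁ : ℝ → ℝ := fun y => ∫ x in y..xε, f₁ x with hΦ₁def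
  set Φ₂ : ℝ → ℝ := fun y => ∫ x in y..xε, f₂ x with hΦ₂def
  have hΦ₁ : ∀ y : ℝ, HasDerivAt Φ₁ (-f₁ y) y := fun y =>
    intervalIntegral.integral_hasDerivAt_left (hf₁c.intervalIntegrable _ _)
      (hf₁c.stronglyMeasurableAtFilter _ _) hf₁c.continuousAt
  have hΦ₂ : ∀ y : ℝ, HasDerivAt Φ₂ (-f₂ y) y := fun y =>
    intervalIntegral.integral_hasDerivAt_left (hf₂c.intervalIntegrable _ _)
      (hf₂c.stronglyMeasurableAtFilter _ _) hf₂c.continuousAt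
  -- key derivative for the auxiliary form
  have key : ∀ g ∈ s,
      HasDerivWithinAt (fun t => (1 + t) * Φ₁ (a t) + t * Φ₂ (a t) + t * a t)
        (Φ₁ (a g) + Φ₂ (a g) + a g) s g := by
    intro g hg
    have hag := hrange g hg
    have ha' := hderiv g hg
    have h1 : HasDerivWithinAt (fun t => Φ₁ (a t)) (-f₁ (a g) * a' g) s g :=
      (hΦ₁ (a g)).comp_hasDerivWithinAt g ha'
    have h2 : HasDerivWithinAt (fun t => Φ₂ (a t)) (-f₂ (a g) * a' g) s g :=
      (hΦ₂ (a g)).comp_hasDerivWithinAt g ha'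
    have hid : HasDerivWithinAt (fun t : ℝ => 1 + t) 1 s g := by
      simpa using (hasDerivWithinAt_id g s).const_add (1:ℝ)
    have hA := hid.mul h1
    have hB := (hasDerivWithinAt_id g s).mul h2
    have hC := (hasDerivWithinAt_id g s).mul ha'
    have htot := (hA.add hB).add hC
    convert htot using 1
    case e'_4 => rfl
    case e'_5 => rfl
    case e'_8 => rfl
    have hKag : f₁ (a g) = g / (1 + g) * F (a g) := by
      rw [hf₁x _ hag]; exact heq g hg
    have hg1 : (0:ℝ) < 1 + g := by
      have := hg.1; linarith
    rw [hKag]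
    simp only [hf₂, id]
    field_simp
    ring
  -- transfer to the original form
  have hEqOn : ∀ t ∈ s,
      (1 + t) * (∫ x in a t..xε, K₀ (F x)) + t * (∫ x in a t..xε, (1 - F x)) + t * a t
        = (1 + t) * Φ₁ (a t) + t * Φ₂ (a t) + t * a t := by
    intro t ht
    rw [hIcongr (a t) xε (hrange t ht) hxεmem]
  have hD'eq : ∀ g ∈ s,
      (∫ x in a g..xε, K₀ (F x)) + (∫ x in a g..xε, (1 - F x)) + a g
        = Φ₁ (a g) + Φ₂ (a g) + a g := by
    intro g hg
    rw [hIcongr (a g) xε (hrange g hg) hxεmem]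
  have key' : ∀ g ∈ s,
      HasDerivWithinAt
        (fun t => (1 + t) * (∫ x in a t..xε, K₀ (F x))
          + t * (∫ x in a t..xε, (1 - F x)) + t * a t)
        ((∫ x in a g..xε, K₀ (F x)) + (∫ x in a g..xε, (1 - F x)) + a g) s g := by
    intro g hg
    rw [hD'eq g hg]
    exact (key g hg).congr (fun t ht => hEqOn t ht) (hEqOn g hg)
  -- antitonicity of H'
  have hH'anti : AntitoneOn
      (fun g => (∫ x in a g..xε, K₀ (F x)) + (∫ x in a g..xε, (1 - F x)) + a g) s := by
    intro g₁ hg₁ g₂ hg₂ h12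
    have ha1 := hrange g₁ hg₁
    have ha2 := hrange g₂ hg₂
    have haa : a g₂ ≤ a g₁ := hanti hg₁ hg₂ h12
    simp only
    rw [hD'eq g₁ hg₁, hD'eq g₂ hg₂]
    have hsplit1 : Φ₁ (a g₂) = (∫ x in a g₂..a g₁, f₁ x) + Φ₁ (a g₁) :=
      (intervalIntegral.integral_add_adjacent_intervals
        (hf₁c.intervalIntegrable _ _) (hf₁c.intervalIntegrable _ _)).symm
    have hsplit2 : Φ₂ (a g₂) = (∫ x in a g₂..a g₁, f₂ x) + Φ₂ (a g₁) :=
      (intervalIntegral.integral_add_adjacent_intervals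
        (hf₂c.intervalIntegrable _ _) (hf₂c.intervalIntegrable _ _)).symm
    have hgap : a g₁ - a g₂ = ∫ _x in a g₂..a g₁, (1:ℝ) := by
      simp
    -- pointwise bound via IVT
    have hcontA : ContinuousOn a (Icc g₁ g₂) := by
      intro t ht
      have hts : t ∈ s := ⟨le_trans hg₁.1 ht.1, le_trans ht.2 hg₂.2⟩
      exact ((hderiv t hts).continuousWithinAt).mono
        (fun u hu => (⟨le_trans hg₁.1 hu.1, le_trans hu.2 hg₂.2⟩ : u ∈ s))
    have hpt : ∀ x ∈ Icc (a g₂) (a g₁), f₁ x + f₂ x ≤ 1 := by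
      intro x hx
      obtain ⟨g, hgmem, hgx⟩ :=
        intermediate_value_Icc' h12 hcontA hx
      have hgs : g ∈ s := ⟨le_trans hg₁.1 hgmem.1, le_trans hgmem.2 hg₂.2⟩
      have hxmem : x ∈ Icc (0:ℝ) xε := ⟨le_trans ha2.1 hx.1, le_trans hx.2 ha1.2⟩
      have hFx : 0 ≤ F x := (hFrange x hxmem.1).1
      have hKx : f₁ x = g / (1 + g) * F x := by
        rw [hf₁x x hxmem, ← hgx]; exact heq g hgs
      have hg0 : (0:ℝ) < g := lt_of_lt_of_le hγlo hgs.1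
      have hle1 : g / (1 + g) ≤ 1 := by
        rw [div_le_one (by linarith)]; linarith
      have : f₁ x ≤ F x := by
        rw [hKx]
        calc g / (1 + g) * F x ≤ 1 * F x := mul_le_mul_of_nonneg_right hle1 hFx
          _ = F x := one_mul _
      simp only [hf₂]; linarith
    have hint : (∫ x in a g₂..a g₁, f₁ x) + (∫ x in a g₂..a g₁, f₂ x)
        ≤ a g₁ - a g₂ := by
      rw [hgap, ← intervalIntegral.integral_add (hf₁c.intervalIntegrable _ _)
        (hf₂c.intervalIntegrable _ _)]
      exact intervalIntegral.integral_mono_on haa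
        ((hf₁c.add hf₂c).intervalIntegrable _ _)
        (intervalIntegrable_const) hpt
    rw [hsplit1, hsplit2]
    linarith
  refine ⟨key', hH'anti, ?_⟩
  -- concavity
  have hconv : Convex ℝ s := convex_Icc _ _
  have hcont : ContinuousOn
      (fun t => (1 + t) * (∫ x in a t..xε, K₀ (F x))
        + t * (∫ x in a t..xε, (1 - F x)) + t * a t) s :=
    fun g hg => (key' g hg).continuousWithinAt
  have hintmem : ∀ x ∈ interior s, HasDerivAt
      (fun t => (1 + t) * (∫ x in a t..xε, K₀ (F x))
        + t * (∫ x in a t..xε, (1 - F x)) + t * a t)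
      ((∫ u in a x..xε, K₀ (F u)) + (∫ u in a x..xε, (1 - F u)) + a x) x := by
    intro x hx
    rw [hs, interior_Icc] at hx
    exact (key' x (Ioo_subset_Icc_self hx)).hasDerivAt (Icc_mem_nhds hx.1 hx.2)
  refine AntitoneOn.concaveOn_of_deriv hconv hcont
    (fun x hx => ((hintmem x hx).differentiableAt).differentiableWithinAt) ?_
  intro x hx y hy hxy
  rw [(hintmem x hx).deriv, (hintmem y hy).deriv]
  rw [hs, interior_Icc] at hx hy
  exact hH'anti (Ioo_subset_Icc_self hx) (Ioo_subset_Icc_self hy) hxy
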